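/- For every positive integer n, the number of 2-Motzkin paths of length n−1 equals the Catalan number C_n. -/

import Mathlib

/-- Steps of a 2-Motzkin path: up, down, and two kinds of level steps. -/
inductive MStep : Type
  | up | down | straight | wavy
deriving DecidableEq

/-- The vertical displacement of a 2-Motzkin step. -/
def mval : MStep → ℤ
  | .up => 1
  | .down => -1
  | .straight => 0
  | .wavy => 0

/-- The level (y-coordinate) of the path `p` after `k` steps. -/
def mlvl (p : List MStep) (k : ℕ) : ℤ := ((p.take k).map mval).sum

/-- `p` is a 2-Motzkin path: it ends on the x-axis and never goes below it. -/
def IsMotzkin2 (p : List MStep) : Prop :=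
  mlvl p p.length = 0 ∧ ∀ k ≤ p.length, 0 ≤ mlvl p k

/-! ### Basic lemmas about `mlvl` -/

lemma mval_ge (s : MStep) : -1 ≤ mval s := by cases s <;> simp [mval]

lemma mlvl_zero' (p : List MStep) : mlvl p 0 = 0 := rfl

lemma mlvl_cons (s : MStep) (p : List MStep) (k : ℕ) :
    mlvl (s :: p) (k + 1) = mval s + mlvl p k := by
  simp [mlvl]

lemma mlvl_succ (p : List MStep) (m : ℕ) (h : m < p.length) :
    mlvl p (m + 1) = mlvl p m + mval p[m] := by
  have h' : m < (p.map mval).length := by simpa using h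
  have := List.sum_take_succ (p.map mval) m h'
  simpa [mlvl, List.map_take] using this

lemma mlvl_append_left (a b : List MStep) {k : ℕ} (h : k ≤ a.length) :
    mlvl (a ++ b) k = mlvl a k := by
  simp [mlvl, List.take_append_of_le_length h]

lemma mlvl_append_right (a b : List MStep) (k : ℕ) :
    mlvl (a ++ b) (a.length + k) = mlvl a a.length + mlvl b k := by
  simp [mlvl, List.take_append, List.take_of_length_le]

lemma mlvl_take (q : List MStep) (m k : ℕ) (hk : k ≤ m) :
    mlvl (q.take m) k = mlvl q k := by
  simp [mlvl, List.take_take, Nat.min_eq_left hk]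

lemma mlvl_drop (q : List MStep) (m k : ℕ) (hm : m ≤ q.length) :
    mlvl q m + mlvl (q.drop m) k = mlvl q (m + k) := by
  have h := mlvl_append_right (q.take m) (q.drop m) k
  rw [List.take_append_drop] at h
  simp only [List.length_take, Nat.min_eq_left hm] at h
  rw [mlvl_take q m m le_rfl] at h
  omega

/-! ### Building Motzkin paths -/

lemma motzkin_nil : IsMotzkin2 ([] : List MStep) :=
  ⟨rfl, fun k _ => by simp [mlvl]⟩

lemma motzkin_cons_level {p : List MStep} (s : MStep) (hs : mval s = 0)
    (hp : IsMotzkin2 p) : IsMotzkin2 (s :: p) := by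
  obtain ⟨h1, h2⟩ := hp
  constructor
  · simp only [List.length_cons, mlvl_cons, hs, zero_add]; exact h1
  · intro k hk
    cases k with
    | zero => simp [mlvl]
    | succ j =>
      rw [mlvl_cons, hs, zero_add]
      exact h2 j (by simpa using hk)

lemma motzkin_of_cons_level {p : List MStep} {s : MStep} (hs : mval s = 0)
    (hp : IsMotzkin2 (s :: p)) : IsMotzkin2 p := by
  obtain ⟨h1, h2⟩ := hp
  constructor
  · simp only [List.length_cons, mlvl_cons, hs, zero_add] at h1; exact h1
  · intro k hk
    have := h2 (k + 1) (by simpa using Nat.succ_le_succ hk)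
    rwa [mlvl_cons, hs, zero_add] at this

lemma motzkin_up_down {a b : List MStep} (ha : IsMotzkin2 a) (hb : IsMotzkin2 b) :
    IsMotzkin2 (.up :: (a ++ .down :: b)) := by
  obtain ⟨ha1, ha2⟩ := ha
  obtain ⟨hb1, hb2⟩ := hb
  have hmid : ∀ k : ℕ, mlvl (a ++ .down :: b) (a.length + k) =
      mlvl (MStep.down :: b) k := by
    intro k; rw [mlvl_append_right, ha1, zero_add]
  constructor
  · have hlen : (a ++ MStep.down :: b).length = a.length + (b.length + 1) := by
      simp
    simp only [List.length_cons, mlvl_cons, hlen, hmid, mlvl_cons]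
    simp only [mval, hb1]
    ring
  · intro k hk
    cases k with
    | zero => simp [mlvl]
    | succ j =>
      rw [mlvl_cons]
      have hj : j ≤ (a ++ MStep.down :: b).length := by
        simp only [List.length_cons] at hk; omega
      rcases le_or_gt j a.length with hja | hja
      · rw [mlvl_append_left _ _ hja]
        have := ha2 j hja
        simp only [mval]; linarith
      · obtain ⟨i, rfl⟩ := Nat.exists_eq_add_of_le hja.le
        rw [hmid]
        cases i with
        | zero => simp [mlvl, mval] at hja ⊢
        | succ i' =>
          rw [mlvl_cons]
          have hi' : i' ≤ b.length := by
            simp only [List.length_append, List.length_cons] at hj; omega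
          have := hb2 i' hi'
          simp only [mval]; linarith

/-! ### First-return decomposition -/

lemma motzkin_up_decomp {q : List MStep} (hp : IsMotzkin2 (.up :: q)) :
    ∃ a b : List MStep, q = a ++ .down :: b ∧ IsMotzkin2 a ∧ IsMotzkin2 b := by
  obtain ⟨h1, h2⟩ := hp
  have hq1 : mlvl q q.length = -1 := by
    simp only [List.length_cons, mlvl_cons] at h1
    simp only [mval] at h1; linarith
  have hq2 : ∀ j ≤ q.length, -1 ≤ mlvl q j := by
    intro j hj
    have := h2 (j + 1) (by simpa using Nat.succ_le_succ hj)
    rw [mlvl_cons] at this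
    simp only [mval] at this; linarith
  classical
  have hex : ∃ j, mlvl q j = -1 ∧ j ≤ q.length := ⟨q.length, hq1, le_rfl⟩
  obtain ⟨m, hm1, hm2, hmin⟩ : ∃ m, mlvl q (m + 1) = -1 ∧ m + 1 ≤ q.length ∧
      ∀ i ≤ m, 0 ≤ mlvl q i := by
    obtain ⟨hj1, hj2⟩ := Nat.find_spec hex
    have hjpos : 0 < Nat.find hex := by
      rcases Nat.eq_zero_or_pos (Nat.find hex) with h | h
      · rw [h] at hj1; simp [mlvl] at hj1
      · exact h
    refine ⟨Nat.find hex - 1, ?_, by omega, ?_⟩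
    · have he : Nat.find hex - 1 + 1 = Nat.find hex := by omega
      rw [he]; exact hj1
    · intro i hi
      have hilt : i < Nat.find hex := by omega
      have hile : i ≤ q.length := by omega
      have := Nat.find_min hex hilt
      have hne : mlvl q i ≠ -1 := fun h => this ⟨h, hile⟩
      have := hq2 i hile
      omega
  have hmlt : m < q.length := by omega
  have hstep : mlvl q (m + 1) = mlvl q m + mval q[m] := mlvl_succ q m hmlt
  have h0 : 0 ≤ mlvl q m := hmin m le_rfl
  have hvge := mval_ge q[m]
  have hval : mval q[m] = -1 := by omega
  have hqm0 : mlvl q m = 0 := by omega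
  have hdown : q[m] = .down := by
    cases h : q[m] <;> simp [mval, h] at hval ⊢
  refine ⟨q.take m, q.drop (m + 1), ?_, ?_, ?_⟩
  · conv_lhs => rw [← List.take_append_drop m q]
    rw [List.drop_eq_getElem_cons hmlt, hdown]
  · constructor
    · have hlen : (q.take m).length = m := by
        rw [List.length_take]; omega
      rw [hlen, mlvl_take q m m le_rfl, hqm0]
    · intro k hk
      have hkm : k ≤ m := by
        rw [List.length_take] at hk; omega
      rw [mlvl_take q m k hkm]
      exact hmin k hkm
  · have hdroplen : (q.drop (m + 1)).length = q.length - (m + 1) := by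
      rw [List.length_drop]
    constructor
    · have := mlvl_drop q (m + 1) (q.drop (m + 1)).length hm2
      rw [hdroplen] at this ⊢
      have harith : m + 1 + (q.length - (m + 1)) = q.length := by omega
      rw [harith] at this
      omega
    · intro k hk
      have := mlvl_drop q (m + 1) k hm2
      have hle : m + 1 + k ≤ q.length := by
        rw [hdroplen] at hk; omega
      have := hq2 (m + 1 + k) hle
      omega

lemma no_shorter {a₁ b₁ a₂ b₂ : List MStep}
    (ha1 : mlvl a₁ a₁.length = 0) (ha2 : IsMotzkin2 a₂)
    (h : a₁ ++ .down :: b₁ = a₂ ++ .down :: b₂) :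
    ¬ a₁.length < a₂.length := by
  intro hlt
  have h1 : mlvl (a₁ ++ .down :: b₁) (a₁.length + 1) = -1 := by
    rw [mlvl_append_right a₁ _ 1, ha1, mlvl_cons]
    simp [mval, mlvl]
  have h2 : 0 ≤ mlvl (a₂ ++ .down :: b₂) (a₁.length + 1) := by
    rw [mlvl_append_left _ _ hlt]
    exact ha2.2 _ hlt
  rw [h] at h1
  omega

lemma decomp_unique {a₁ b₁ a₂ b₂ : List MStep}
    (h : a₁ ++ .down :: b₁ = a₂ ++ .down :: b₂)
    (H1 : IsMotzkin2 a₁) (H2 : IsMotzkin2 a₂) : a₁ = a₂ ∧ b₁ = b₂ := by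
  have hlen : a₁.length = a₂.length := by
    have n1 := no_shorter H1.1 H2 h
    have n2 := no_shorter H2.1 H1 h.symm
    omega
  obtain ⟨e1, e2⟩ := List.append_inj h hlen
  refine ⟨e1, ?_⟩
  injection e2

/-! ### The bijection with binary trees -/

def toPath : Tree Unit → List MStep
  | .nil => []
  | .node _ .nil .nil => []
  | .node _ .nil (.node b l r) => .wavy :: toPath (.node b l r)
  | .node _ (.node b l r) .nil => .straight :: toPath (.node b l r)
  | .node _ (.node b l r) (.node b' l' r') =>
      .up :: (toPath (.node b l r) ++ .down :: toPath (.node b' l' r'))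

lemma motzkin_toPath : ∀ t : Tree Unit, IsMotzkin2 (toPath t)
  | .nil => motzkin_nil
  | .node _ .nil .nil => motzkin_nil
  | .node _ .nil (.node b l r) =>
      motzkin_cons_level _ rfl (motzkin_toPath (.node b l r))
  | .node _ (.node b l r) .nil =>
      motzkin_cons_level _ rfl (motzkin_toPath (.node b l r))
  | .node _ (.node b l r) (.node b' l' r') =>
      motzkin_up_down (motzkin_toPath (.node b l r)) (motzkin_toPath (.node b' l' r'))

lemma length_toPath : ∀ t : Tree Unit, t ≠ .nil → (toPath t).length + 1 = t.numNodes
  | .node _ .nil .nil, _ => by simp [toPath]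
  | .node _ .nil (.node b l r), _ => by
      have := length_toPath (.node b l r) (by simp)
      simp only [toPath, List.length_cons, Tree.numNodes, BinaryTree.numNodes] at this ⊢
      omega
  | .node _ (.node b l r) .nil, _ => by
      have := length_toPath (.node b l r) (by simp)
      simp only [toPath, List.length_cons, Tree.numNodes, BinaryTree.numNodes] at this ⊢
      omega
  | .node _ (.node b l r) (.node b' l' r'), _ => by
      have h1 := length_toPath (.node b l r) (by simp)
      have h2 := length_toPath (.node b' l' r') (by simp)
      simp only [toPath, List.length_cons, List.length_append, Tree.numNodes, BinaryTree.numNodes] at h1 h2 ⊢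
      omega

lemma toPath_inj_aux : ∀ n : ℕ, ∀ s t : Tree Unit, s.numNodes ≤ n →
    s ≠ .nil → t ≠ .nil → toPath s = toPath t → s = t := by
  intro n
  induction n with
  | zero =>
    intro s t hn hs _ _
    cases s with
    | nil => exact absurd rfl hs
    | node a l r => simp at hn
  | succ n ih =>
    intro s t hn hs ht h
    match s, t with
    | .nil, _ => exact absurd rfl hs
    | .node _ _ _, .nil => exact absurd rfl ht
    | .node a l r, .node a' l' r' =>
      obtain ⟨⟩ := a; obtain ⟨⟩ := a'
      match l, r, l', r' with
      | .nil, .nil, .nil, .nil => rfl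
      | .nil, .nil, .nil, .node _ _ _ => simp [toPath] at h
      | .nil, .nil, .node _ _ _, .nil => simp [toPath] at h
      | .nil, .nil, .node _ _ _, .node _ _ _ => simp [toPath] at h
      | .nil, .node _ _ _, .nil, .nil => simp [toPath] at h
      | .nil, .node b2 l2 r2, .nil, .node b2' l2' r2' =>
        simp only [toPath, List.cons.injEq, true_and] at h
        have hnum : (Tree.node b2 l2 r2).numNodes ≤ n := by
          simp only [Tree.numNodes, BinaryTree.numNodes] at hn ⊢; omega
        rw [ih _ _ hnum (by simp) (by simp) h]
      | .nil, .node _ _ _, .node _ _ _, .nil => simp [toPath] at h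
      | .nil, .node _ _ _, .node _ _ _, .node _ _ _ => simp [toPath] at h
      | .node _ _ _, .nil, .nil, .nil => simp [toPath] at h
      | .node _ _ _, .nil, .nil, .node _ _ _ => simp [toPath] at h
      | .node b1 l1 r1, .nil, .node b1' l1' r1', .nil =>
        simp only [toPath, List.cons.injEq, true_and] at h
        have hnum : (Tree.node b1 l1 r1).numNodes ≤ n := by
          simp only [Tree.numNodes, BinaryTree.numNodes] at hn ⊢; omega
        rw [ih _ _ hnum (by simp) (by simp) h]
      | .node _ _ _, .nil, .node _ _ _, .node _ _ _ => simp [toPath] at h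
      | .node _ _ _, .node _ _ _, .nil, .nil => simp [toPath] at h
      | .node _ _ _, .node _ _ _, .nil, .node _ _ _ => simp [toPath] at h
      | .node _ _ _, .node _ _ _, .node _ _ _, .nil => simp [toPath] at h
      | .node b1 l1 r1, .node b2 l2 r2, .node b1' l1' r1', .node b2' l2' r2' =>
        simp only [toPath, List.cons.injEq, true_and] at h
        obtain ⟨e1, e2⟩ := decomp_unique h
          (motzkin_toPath (.node b1 l1 r1)) (motzkin_toPath (.node b1' l1' r1'))
        have hnum1 : (Tree.node b1 l1 r1).numNodes ≤ n := by
          simp only [Tree.numNodes, BinaryTree.numNodes] at hn ⊢; omega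
        have hnum2 : (Tree.node b2 l2 r2).numNodes ≤ n := by
          simp only [Tree.numNodes, BinaryTree.numNodes] at hn ⊢; omega
        rw [ih _ _ hnum1 (by simp) (by simp) e1, ih _ _ hnum2 (by simp) (by simp) e2]

lemma toPath_surj : ∀ n : ℕ, ∀ p : List MStep, p.length ≤ n → IsMotzkin2 p →
    ∃ t : Tree Unit, t ≠ .nil ∧ toPath t = p := by
  intro n
  induction n with
  | zero =>
    intro p hl _
    have : p = [] := List.length_eq_zero_iff.mp (Nat.le_zero.mp hl)
    subst this
    exact ⟨.node () .nil .nil, by simp, rfl⟩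
  | succ n ih =>
    intro p hl hp
    match p with
    | [] => exact ⟨.node () .nil .nil, by simp, rfl⟩
    | .straight :: q =>
      have hq := motzkin_of_cons_level (s := .straight) rfl hp
      obtain ⟨t, htn, hteq⟩ := ih q (by simpa using hl) hq
      match t, htn with
      | .node b l r, _ =>
        exact ⟨.node () (.node b l r) .nil, by simp, by simp [toPath, hteq]⟩
    | .wavy :: q =>
      have hq := motzkin_of_cons_level (s := .wavy) rfl hp
      obtain ⟨t, htn, hteq⟩ := ih q (by simpa using hl) hq
      match t, htn with
      | .node b l r, _ =>
        exact ⟨.node () .nil (.node b l r), by simp, by simp [toPath, hteq]⟩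
    | .down :: q =>
      exfalso
      have := hp.2 1 (by simp)
      rw [show (1 : ℕ) = 0 + 1 from rfl, mlvl_cons] at this
      simp [mval, mlvl] at this
    | .up :: q =>
      obtain ⟨a, b, rfl, ha, hb⟩ := motzkin_up_decomp hp
      have hla : a.length ≤ n := by
        simp only [List.length_cons, List.length_append] at hl; omega
      have hlb : b.length ≤ n := by
        simp only [List.length_cons, List.length_append] at hl; omega
      obtain ⟨tl, htln, htleq⟩ := ih a hla ha
      obtain ⟨tr, htrn, htreq⟩ := ih b hlb hb
      match tl, tr, htln, htrn with
      | .node c1 x1 y1, .node c2 x2 y2, _, _ =>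
        exact ⟨.node () (.node c1 x1 y1) (.node c2 x2 y2), by simp,
          by simp [toPath, htleq, htreq]⟩

theorem motzkin2_count_eq_catalan (n : ℕ) (hn : 0 < n) :
    {p : List MStep | IsMotzkin2 p ∧ p.length = n - 1}.ncard =
      Nat.choose (2 * n) n / (n + 1) := by
  classical
  have himg : toPath '' ((Tree.treesOfNumNodesEq n : Finset (Tree Unit)) : Set (Tree Unit))
      = {p : List MStep | IsMotzkin2 p ∧ p.length = n - 1} := by
    ext p
    simp only [Set.mem_image, Finset.mem_coe, BinaryTree.mem_treesOfNumNodesEq, Set.mem_setOf_eq]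
    constructor
    · rintro ⟨t, ht, rfl⟩
      have htn : t ≠ .nil := by rintro rfl; simp at ht; omega
      have hlen := length_toPath t htn
      exact ⟨motzkin_toPath t, by simp only [Tree.numNodes] at hlen; omega⟩
    · rintro ⟨hp, hlen⟩
      obtain ⟨t, htn, rfl⟩ := toPath_surj _ p le_rfl hp
      have := length_toPath t htn
      exact ⟨t, by simp only [Tree.numNodes] at this; omega, rfl⟩
  have hinj : Set.InjOn toPath ((Tree.treesOfNumNodesEq n : Finset (Tree Unit)) : Set (Tree Unit)) := by
    intro s hs t ht h
    simp only [Finset.mem_coe, BinaryTree.mem_treesOfNumNodesEq] at hs ht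
    have hsn : s ≠ .nil := by rintro rfl; simp at hs; omega
    have htn : t ≠ .nil := by rintro rfl; simp at ht; omega
    exact toPath_inj_aux s.numNodes s t le_rfl hsn htn h
  rw [← himg, Set.ncard_image_of_injOn hinj, Set.ncard_coe_finset,
    BinaryTree.treesOfNumNodesEq_card_eq_catalan, catalan_eq_centralBinom_div]
  rfl
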